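/- Saturation proposition: let 𝒜 ⊂ Rec_{p×q}(K) be a recursively closed subspace with finite saturation level N (i.e., the restriction map 𝒜[M^{≤N+1}] → 𝒜[M^{≤N}] between spaces of restrictions to words of length ≤ N+1 and ≤ N is an isomorphism). Then the restriction map 𝒜 → 𝒜[M^{≤N}] is an isomorphism; equivalently, any A ∈ 𝒜 vanishing on all words of length ≤ N is identically zero. -/

import Mathlib

/-- The free monoid `M_{p×q}` of pairs of equal-length words. -/
def EqPair (p q : ℕ) : Type :=
  {x : List (Fin p) × List (Fin q) // x.1.length = x.2.length}

/-- The single-letter shift operator `ρ(s,t)`: `(ρ(s,t)A)[U,W] = A[Us,Wt]`. -/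
def shiftL (p q : ℕ) (K : Type*) [Field K] (s : Fin p) (t : Fin q) :
    (EqPair p q → K) →ₗ[K] (EqPair p q → K) where
  toFun A := fun x => A ⟨(x.1.1 ++ [s], x.1.2 ++ [t]), by simp [x.2]⟩
  map_add' _ _ := rfl
  map_smul' _ _ := rfl

/-- A subspace of `K^{M_{p×q}}` is recursively closed if it is stable under
all shift operators. -/
def RecClosed (p q : ℕ) (K : Type*) [Field K]
    (V : Submodule K (EqPair p q → K)) : Prop :=
  ∀ (s : Fin p) (t : Fin q), ∀ A ∈ V, shiftL p q K s t A ∈ V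

/-- The recursive closure of `A`: the smallest recursively closed subspace
containing `A`. -/
def recClosure (p q : ℕ) (K : Type*) [Field K] (A : EqPair p q → K) :
    Submodule K (EqPair p q → K) :=
  sInf {V | A ∈ V ∧ RecClosed p q K V}

/-- `A` is a recurrence matrix if its recursive closure is
finite-dimensional. -/
def IsRecMatrix (p q : ℕ) (K : Type*) [Field K] (A : EqPair p q → K) : Prop :=
  FiniteDimensional K (recClosure p q K A)

/-- The matrix product `(A·B)[U,W] = ∑_V A[U,V] B[V,W]`. -/
def matMul {p r q : ℕ} {K : Type*} [Field K]
    (A : EqPair p r → K) (B : EqPair r q → K) : EqPair p q → K :=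
  fun x => ∑ V : Fin x.1.1.length → Fin r,
    A ⟨(x.1.1, List.ofFn V), by simp⟩ * B ⟨(List.ofFn V, x.1.2), by simp [x.2]⟩

/-- Iterated shift by a list of letter pairs. -/
def shiftMany {p q : ℕ} {K : Type*} [Field K] :
    List (Fin p × Fin q) → (EqPair p q → K) → (EqPair p q → K)
  | [], A => A
  | st :: l, A => shiftL p q K st.1 st.2 (shiftMany l A)

lemma shiftMany_apply {p q : ℕ} {K : Type*} [Field K]
    (l : List (Fin p × Fin q)) (A : EqPair p q → K) (x : EqPair p q) :
    shiftMany l A x =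
      A ⟨(x.1.1 ++ l.map Prod.fst, x.1.2 ++ l.map Prod.snd), by simp [x.2]⟩ := by
  induction l generalizing x with
  | nil =>
      show A x = _
      congr 1
      exact Subtype.ext (by simp)
  | cons st l ih =>
      show shiftMany l A ⟨(x.1.1 ++ [st.1], x.1.2 ++ [st.2]), by simp [x.2]⟩ = _
      refine (ih _).trans ?_
      congr 1
      exact Subtype.ext (by simp)

lemma shiftMany_mem {p q : ℕ} {K : Type*} [Field K]
    {V : Submodule K (EqPair p q → K)} (hV : RecClosed p q K V)
    (l : List (Fin p × Fin q)) {A : EqPair p q → K} (hA : A ∈ V) :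
    shiftMany l A ∈ V := by
  induction l with
  | nil => exact hA
  | cons st l ih => exact hV st.1 st.2 _ ih

/-- Saturation proposition: if `𝒜` is a recursively closed subspace of
recurrence matrices whose restriction map `𝒜[M^{≤N+1}] → 𝒜[M^{≤N}]` is an
isomorphism (i.e. any element of `𝒜` vanishing on words of length `≤ N`
vanishes on words of length `≤ N+1`), then restriction `𝒜 → 𝒜[M^{≤N}]` is
an isomorphism: any `A ∈ 𝒜` vanishing on all words of length `≤ N` is
identically zero. -/
theorem saturation {p q : ℕ} {K : Type*} [Field K]
    (V : Submodule K (EqPair p q → K)) (hV : RecClosed p q K V)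
    (hrec : ∀ A ∈ V, IsRecMatrix p q K A) (N : ℕ)
    (hsat : ∀ A ∈ V, (∀ x : EqPair p q, x.1.1.length ≤ N → A x = 0) →
      ∀ x : EqPair p q, x.1.1.length ≤ N + 1 → A x = 0) :
    ∀ A ∈ V, (∀ x : EqPair p q, x.1.1.length ≤ N → A x = 0) → A = 0 := by
  intro A hA h0
  have key : ∀ k, ∀ x : EqPair p q, x.1.1.length ≤ N + k → A x = 0 := by
    intro k
    induction k with
    | zero => simpa using h0
    | succ k ih =>
        intro x hx
        rcases Nat.lt_or_ge x.1.1.length (N + k + 1) with h | h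
        · exact ih x (Nat.lt_succ_iff.mp h)
        · have hlen : x.1.1.length = N + k + 1 := le_antisymm hx h
          have hlen2 : x.1.2.length = N + k + 1 := x.2 ▸ hlen
          set su := x.1.1.drop (N + 1) with hsu_def
          set sw := x.1.2.drop (N + 1) with hsw_def
          have hsu : su.length = k := by simp [hsu_def, hlen]
          have hsw : sw.length = k := by simp [hsw_def, hlen2]
          set l := su.zip sw with hl_def
          have hmf : l.map Prod.fst = su := by rw [hl_def]; exact List.map_fst_zip (by omega)
          have hms : l.map Prod.snd = sw := by rw [hl_def]; exact List.map_snd_zip (by omega)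
          have hB : shiftMany l A ∈ V := shiftMany_mem hV l hA
          have hB0 : ∀ y : EqPair p q, y.1.1.length ≤ N → shiftMany l A y = 0 := by
            intro y hy
            rw [shiftMany_apply]
            apply ih
            have hll : (l.map Prod.fst).length = k := by rw [hmf]; exact hsu
            simp only [List.length_append]
            omega
          have h1 := hsat _ hB hB0
            ⟨(x.1.1.take (N + 1), x.1.2.take (N + 1)), by simp [x.2]⟩
            (by simp [hlen])
          replace h1 := (shiftMany_apply _ _ _).symm.trans h1
          have hx' : (⟨(x.1.1.take (N + 1) ++ l.map Prod.fst,
              x.1.2.take (N + 1) ++ l.map Prod.snd), by simp [x.2]⟩ : EqPair p q) = x := by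
            apply Subtype.ext
            show (x.1.1.take (N + 1) ++ l.map Prod.fst,
                x.1.2.take (N + 1) ++ l.map Prod.snd) = x.1
            rw [hmf, hms]
            exact Prod.ext (List.take_append_drop _ _) (List.take_append_drop _ _)
          have h1' : A ⟨(x.1.1.take (N + 1) ++ l.map Prod.fst,
              x.1.2.take (N + 1) ++ l.map Prod.snd), by simp [x.2]⟩ = 0 := h1
          exact (congrArg A hx'.symm).trans h1'
  funext x
  exact key x.1.1.length x (Nat.le_add_left _ _)
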